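/- If (X, 𝒜, μ) is a σ-finite measure space and ℰ ⊆ 𝒜 is any collection of measurable sets, then ℰ admits a μ-essential supremum: there exists A ∈ 𝒜 with μ(E \ A) = 0 for all E ∈ ℰ, and μ(A \ B) = 0 for every B ∈ 𝒜 satisfying μ(E \ B) = 0 for all E ∈ ℰ. -/

import Mathlib

open MeasureTheory

/-- Every collection `ℰ` of measurable sets in a σ-finite measure space admits a
`μ`-essential supremum. -/
theorem essSup_exists_of_sigmaFinite {X : Type*} [MeasurableSpace X]
    (μ : Measure X) [SigmaFinite μ] (ℰ : Set (Set X)) (hE : ∀ E ∈ ℰ, MeasurableSet E) :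
    ∃ A : Set X, MeasurableSet A ∧ (∀ E ∈ ℰ, μ (E \ A) = 0) ∧
      ∀ B : Set X, MeasurableSet B → (∀ E ∈ ℰ, μ (E \ B) = 0) → μ (A \ B) = 0 := by
  set ν := μ.toFinite with hν
  have hnull : ∀ s : Set X, μ s = 0 ↔ ν s = 0 := fun s =>
    ⟨fun h => MeasureTheory.toFinite_absolutelyContinuous μ h,
     fun h => MeasureTheory.absolutelyContinuous_toFinite μ h⟩
  -- the family of countable unions of members of ℰ
  set c : ENNReal := ⨆ S : {S : Set (Set X) // S ⊆ ℰ ∧ S.Countable}, ν (⋃₀ (S : Set (Set X)))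
  have hcne : Nonempty {S : Set (Set X) // S ⊆ ℰ ∧ S.Countable} :=
    ⟨⟨∅, Set.empty_subset _, Set.countable_empty⟩⟩
  -- choose a sequence achieving the supremum
  obtain ⟨T, hT⟩ : ∃ T : ℕ → {S : Set (Set X) // S ⊆ ℰ ∧ S.Countable},
      Filter.Tendsto (fun n => ν (⋃₀ (T n : Set (Set X)))) Filter.atTop (nhds c) := by
    obtain ⟨T, hT⟩ := exists_seq_tendsto_sSup (α := ENNReal)
      (S := Set.range (fun S : {S : Set (Set X) // S ⊆ ℰ ∧ S.Countable} =>
        ν (⋃₀ (S : Set (Set X))))) (Set.range_nonempty _) (OrderTop.bddAbove _)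
    choose g hg using fun n => hT.2.2 n
    refine ⟨g, ?_⟩
    have : (fun n => ν (⋃₀ (g n : Set (Set X)))) = (fun n => T n) := funext hg
    rw [this]
    have hc : c = sSup (Set.range (fun S : {S : Set (Set X) // S ⊆ ℰ ∧ S.Countable} =>
        ν (⋃₀ (S : Set (Set X))))) := (sSup_range).symm
    rw [hc]
    exact hT.2.1
  set S : Set (Set X) := ⋃ n, (T n : Set (Set X)) with hS
  have hSsub : S ⊆ ℰ := Set.iUnion_subset fun n => (T n).2.1
  have hScount : S.Countable := Set.countable_iUnion fun n => (T n).2.2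
  set A : Set X := ⋃₀ S with hA
  have hAmeas : MeasurableSet A := MeasurableSet.sUnion hScount fun E hEs => hE E (hSsub hEs)
  have hAle : ν A ≤ c := le_iSup_of_le ⟨S, hSsub, hScount⟩ le_rfl
  have hAge : c ≤ ν A := by
    refine le_of_tendsto hT (Filter.Eventually.of_forall fun n => ?_)
    exact measure_mono (Set.sUnion_subset_sUnion (Set.subset_iUnion (fun n => (T n : Set (Set X))) n))
  have hAc : ν A = c := le_antisymm hAle hAge
  have hAfin : ν A ≠ ⊤ := measure_ne_top ν A
  refine ⟨A, hAmeas, ?_, ?_⟩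
  · intro E hEE
    rw [hnull]
    by_contra h
    have hcup : ν (A ∪ E) ≤ c := by
      have : A ∪ E = ⋃₀ (S ∪ {E}) := by rw [Set.sUnion_union, Set.sUnion_singleton]
      rw [this]
      exact le_iSup_of_le ⟨S ∪ {E}, Set.union_subset hSsub (by simpa using hEE),
        hScount.union (Set.countable_singleton E)⟩ le_rfl
    have hsplit : ν A + ν (E \ A) = ν (A ∪ E) := by
      rw [← measure_union Set.disjoint_sdiff_right ((hE E hEE).diff hAmeas)]
      congr 1
      rw [Set.union_diff_self]
    have : ν A + ν (E \ A) ≤ ν A + 0 := by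
      rw [hsplit, add_zero, hAc]; exact hcup
    have := (ENNReal.add_le_add_iff_left hAfin).mp this
    exact h (le_antisymm this zero_le)
  · intro B hB hB0
    have : A \ B ⊆ ⋃ E ∈ S, E \ B := by
      intro x ⟨hxA, hxB⟩
      obtain ⟨E, hEs, hxE⟩ := hxA
      exact Set.mem_biUnion hEs ⟨hxE, hxB⟩
    refine measure_mono_null this ?_
    exact (measure_biUnion_null_iff hScount).mpr fun E hEs => hB0 E (hSsub hEs)
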